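/- Let G be a finite simple graph. Then the treewidth of G² satisfies tw(G²) ≤ Δ(G)·(tw(G)+1) − 1, where G² is the graph on V(G) in which two distinct vertices are adjacent if their distance in G is at most 2. -/

import Mathlib

/-- `B : Fin n → Finset V` together with a tree `T` on `Fin n` is a tree decomposition
of `G` of width at most `k` (i.e. all bags have size at most `k + 1`). -/
def HasTreeDecompositionOfWidth {V : Type} (G : SimpleGraph V) (k : ℕ) : Prop :=
  ∃ (n : ℕ) (T : SimpleGraph (Fin n)) (B : Fin n → Finset V),
    T.Connected ∧ T.IsAcyclic ∧
    (∀ v : V, ∃ i, v ∈ B i) ∧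
    (∀ u v : V, G.Adj u v → ∃ i, u ∈ B i ∧ v ∈ B i) ∧
    (∀ v : V, (T.induce {i | v ∈ B i}).Connected) ∧
    (∀ i, (B i).card ≤ k + 1)

/-- The treewidth of a finite graph. -/
noncomputable def treewidth {V : Type} (G : SimpleGraph V) : ℕ :=
  sInf {k | HasTreeDecompositionOfWidth G k}

/-- The square of a graph: distinct vertices are adjacent iff they are at distance at most 2. -/
def graphSquare {V : Type} (G : SimpleGraph V) : SimpleGraph V :=
  SimpleGraph.fromRel (fun u v => G.Adj u v ∨ ∃ w, G.Adj u w ∧ G.Adj w v)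

open SimpleGraph

section Helpers

variable {α : Type*} {T : SimpleGraph α}

/-- Reachability within a set: there is a walk whose support stays in `S`. -/
def ReachIn (T : SimpleGraph α) (S : Set α) (a b : α) : Prop :=
  ∃ p : T.Walk a b, ∀ x ∈ p.support, x ∈ S

lemma ReachIn.mono {S S' : Set α} (hss : S ⊆ S') {a b : α} (h : ReachIn T S a b) :
    ReachIn T S' a b := by
  obtain ⟨p, hp⟩ := h
  exact ⟨p, fun x hx => hss (hp x hx)⟩

lemma ReachIn.symm {S : Set α} {a b : α} (h : ReachIn T S a b) : ReachIn T S b a := by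
  obtain ⟨p, hp⟩ := h
  exact ⟨p.reverse, fun x hx => hp x (by simpa [SimpleGraph.Walk.support_reverse] using hx)⟩

lemma ReachIn.trans {S : Set α} {a b c : α} (h1 : ReachIn T S a b) (h2 : ReachIn T S b c) :
    ReachIn T S a c := by
  obtain ⟨p, hp⟩ := h1; obtain ⟨q, hq⟩ := h2
  refine ⟨p.append q, fun x hx => ?_⟩
  rw [SimpleGraph.Walk.mem_support_append_iff] at hx
  rcases hx with hx | hx
  · exact hp x hx
  · exact hq x hx

lemma reachIn_of_induce_connected {S : Set α} (h : (T.induce S).Connected)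
    {a b : α} (ha : a ∈ S) (hb : b ∈ S) : ReachIn T S a b := by
  obtain ⟨q⟩ := h.preconnected ⟨a, ha⟩ ⟨b, hb⟩
  refine ⟨q.map (SimpleGraph.Embedding.induce S).toHom, fun x hx => ?_⟩
  erw [SimpleGraph.Walk.support_map] at hx
  obtain ⟨y, _, rfl⟩ := List.mem_map.mp hx
  exact y.2

lemma reachable_induce_of_walk {S : Set α} {a b : α} (p : T.Walk a b)
    (hp : ∀ x ∈ p.support, x ∈ S) (ha : a ∈ S) (hb : b ∈ S) :
    (T.induce S).Reachable ⟨a, ha⟩ ⟨b, hb⟩ := by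
  induction p with
  | nil => exact SimpleGraph.Reachable.refl _
  | @cons u v w huv q ih =>
      have hv : v ∈ S := hp v (by simp)
      have h1 : (T.induce S).Adj ⟨u, ha⟩ ⟨v, hv⟩ := by
        simpa using huv
      exact h1.reachable.trans (ih (fun x hx => hp x (by simp [hx])) hv hb)

lemma induce_connected_of_reachIn {S : Set α} (hne : S.Nonempty)
    (h : ∀ a ∈ S, ∀ b ∈ S, ReachIn T S a b) : (T.induce S).Connected := by
  obtain ⟨a0, ha0⟩ := hne
  haveI : Nonempty ↥S := ⟨⟨a0, ha0⟩⟩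
  refine ⟨fun x y => ?_⟩
  obtain ⟨a, ha⟩ := x
  obtain ⟨b, hb⟩ := y
  obtain ⟨p, hp⟩ := h a ha b hb
  exact reachable_induce_of_walk p hp ha hb

lemma induce_connected_of_subsingleton (T : SimpleGraph α) {S : Set α} (hne : S.Nonempty)
    (hsub : S.Subsingleton) : (T.induce S).Connected := by
  obtain ⟨a, ha⟩ := hne
  haveI : Nonempty ↥S := ⟨⟨a, ha⟩⟩
  refine ⟨fun x y => ?_⟩
  have : x = y := Subtype.ext (hsub x.2 y.2)
  rw [this]

lemma reachIn_inter [DecidableEq α] (hT : T.IsAcyclic) {A B : Set α}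
    (hA : (T.induce A).Connected) (hB : (T.induce B).Connected) {a b : α}
    (haA : a ∈ A) (haB : a ∈ B) (hbA : b ∈ A) (hbB : b ∈ B) :
    ReachIn T (A ∩ B) a b := by
  obtain ⟨p, hp⟩ := reachIn_of_induce_connected hA haA hbA
  obtain ⟨q, hq⟩ := reachIn_of_induce_connected hB haB hbB
  have hpq : p.toPath = q.toPath := SimpleGraph.isAcyclic_iff_path_unique.mp hT _ _
  refine ⟨p.toPath.1, fun x hx => ⟨hp x (p.support_bypass_subset hx), ?_⟩⟩
  have hx' : x ∈ (q.toPath.1).support := by rw [← hpq]; exact hx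
  exact hq x (q.support_bypass_subset hx')

end Helpers

section StarTree

/-- The star graph on `Fin (m+1)`, with center `0`. -/
def starTree (m : ℕ) : SimpleGraph (Fin (m + 1)) :=
  SimpleGraph.fromRel (fun i _ => i = 0)

lemma starTree_adj {m : ℕ} {i j : Fin (m + 1)} :
    (starTree m).Adj i j ↔ i ≠ j ∧ (i = 0 ∨ j = 0) := by
  simp [starTree, SimpleGraph.fromRel_adj]

lemma starTree_connected (m : ℕ) : (starTree m).Connected := by
  refine ⟨fun a b => ?_⟩
  have key : ∀ x : Fin (m + 1), (starTree m).Reachable x 0 := by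
    intro x
    by_cases hx : x = 0
    · rw [hx]
    · exact (SimpleGraph.Adj.reachable (starTree_adj.mpr ⟨hx, Or.inr rfl⟩))
  exact (key a).trans (key b).symm

lemma starTree_no_edge_at {m : ℕ} {x : Fin (m + 1)} (hx : x ≠ 0) (z : Fin (m + 1)) :
    ¬(starTree m \ SimpleGraph.fromEdgeSet {s(x, (0 : Fin (m + 1)))}).Adj x z := by
  intro hz
  rw [SimpleGraph.sdiff_adj] at hz
  obtain ⟨h1, h2⟩ := hz
  rw [starTree_adj] at h1
  have hz0 : z = 0 := h1.2.resolve_left hx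
  apply h2
  rw [SimpleGraph.fromEdgeSet_adj]
  subst hz0
  exact ⟨by simp, h1.1⟩

lemma starTree_acyclic (m : ℕ) : (starTree m).IsAcyclic := by
  rw [SimpleGraph.isAcyclic_iff_forall_adj_isBridge]
  intro v w hvw
  rw [SimpleGraph.isBridge_iff]
  have hvw' := starTree_adj.mp hvw
  have key : ∀ (x : Fin (m + 1)), x ≠ 0 → ∀ (y : Fin (m + 1))
      (p : (starTree m \ SimpleGraph.fromEdgeSet {s(x, (0 : Fin (m + 1)))}).Walk x y), x = y := by
    intro x hx y p
    cases p with
    | nil => rfl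
    | cons h q => exact absurd h (starTree_no_edge_at hx _)
  rcases hvw'.2 with hv0 | hw0
  · subst hv0
    intro hr
    obtain ⟨p⟩ := hr.symm
    have : s(w, (0 : Fin (m + 1))) = s((0 : Fin (m+1)), w) := Sym2.eq_swap
    rw [← this] at p
    exact (Ne.symm hvw'.1) (key w (Ne.symm hvw'.1) 0 p)
  · subst hw0
    intro hr
    obtain ⟨p⟩ := hr
    exact hvw'.1 (key v hvw'.1 0 p)

end StarTree

section PickFunctions

variable {V : Type} [Fintype V]

open Classical in
/-- Pick a neighbor of `w` in `G`, if one exists. -/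
noncomputable def pickNbr (G : SimpleGraph V) (w : V) : V :=
  if h : ∃ u, G.Adj w u then h.choose else w

lemma pickNbr_adj {G : SimpleGraph V} {w : V} (h : ∃ u, G.Adj w u) : G.Adj w (pickNbr G w) := by
  rw [pickNbr]
  rw [dif_pos h]
  exact h.choose_spec

open Classical in
/-- Pick a bag containing both `u` and `w`, if one exists. -/
noncomputable def pickBag {n : ℕ} (X : Fin n → Finset V) (i0 : Fin n) (u w : V) : Fin n :=
  if h : ∃ t, u ∈ X t ∧ w ∈ X t then h.choose else i0

lemma pickBag_spec {n : ℕ} {X : Fin n → Finset V} {i0 : Fin n} {u w : V}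
    (h : ∃ t, u ∈ X t ∧ w ∈ X t) : u ∈ X (pickBag X i0 u w) ∧ w ∈ X (pickBag X i0 u w) := by
  rw [pickBag]
  rw [dif_pos h]
  exact h.choose_spec

open Classical in
/-- Pick a walk from `a` to `b` with support in `S`, if one exists; otherwise any walk. -/
noncomputable def pickWalk {n : ℕ} (T : SimpleGraph (Fin n)) (hc : T.Connected)
    (S : Set (Fin n)) (a b : Fin n) : T.Walk a b :=
  if h : ∃ q : T.Walk a b, ∀ x ∈ q.support, x ∈ S then h.choose
  else Classical.choice (hc.preconnected a b)

lemma pickWalk_spec {n : ℕ} {T : SimpleGraph (Fin n)} {hc : T.Connected}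
    {S : Set (Fin n)} {a b : Fin n} (h : ∃ q : T.Walk a b, ∀ x ∈ q.support, x ∈ S) :
    ∀ x ∈ (pickWalk T hc S a b).support, x ∈ S := by
  rw [pickWalk]
  rw [dif_pos h]
  exact h.choose_spec

open Classical in
/-- The auxiliary connecting set used to build a tree decomposition of the square. -/
noncomputable def Qset (G : SimpleGraph V) {n : ℕ} (T : SimpleGraph (Fin n)) (hc : T.Connected)
    (X : Fin n → Finset V) (i0 : Fin n) (u w : V) : Set (Fin n) :=
  if u = pickNbr G w then {t | u ∈ X t ∧ w ∈ X t}
  else {t | u ∈ X t ∧ w ∈ X t} ∪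
    {x | x ∈ (pickWalk T hc {t | w ∈ X t}
      (pickBag X i0 (pickNbr G w) w) (pickBag X i0 u w)).support}

end PickFunctions

section MainStep

variable {V : Type} [Fintype V]

lemma main_step (G : SimpleGraph V) [DecidableRel G.Adj]
    (hD : 1 ≤ G.maxDegree) {k : ℕ} (hk : HasTreeDecompositionOfWidth G k) :
    HasTreeDecompositionOfWidth (graphSquare G) (G.maxDegree * (k + 1) - 1) := by
  classical
  obtain ⟨n, T, X, hTc, hTa, hcov, hedge, htr, hcard⟩ := hk
  haveI : Nonempty (Fin n) := hTc.nonempty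
  set D := G.maxDegree with hDdef
  obtain ⟨i0⟩ := ‹Nonempty (Fin n)›
  -- abbreviations
  set Q : V → V → Set (Fin n) := fun u w => Qset G T hTc X i0 u w with hQdef
  -- basic facts
  have hRne : ∀ {u w : V}, G.Adj w u → ∃ t, u ∈ X t ∧ w ∈ X t := by
    intro u w h
    obtain ⟨t, h1, h2⟩ := hedge w u h
    exact ⟨t, h2, h1⟩
  have hpickNbr : ∀ {u w : V}, G.Adj w u → G.Adj w (pickNbr G w) :=
    fun {u w} h => pickNbr_adj ⟨u, h⟩
  have hcspec : ∀ {u w : V}, G.Adj w u →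
      pickNbr G w ∈ X (pickBag X i0 (pickNbr G w) w) ∧ w ∈ X (pickBag X i0 (pickNbr G w) w) :=
    fun {u w} h => pickBag_spec (hRne (hpickNbr h))
  have hpspec : ∀ {u w : V}, G.Adj w u →
      u ∈ X (pickBag X i0 u w) ∧ w ∈ X (pickBag X i0 u w) :=
    fun {u w} h => pickBag_spec (hRne h)
  -- the chosen walk stays in the trace of w
  have hwalk : ∀ {u w : V}, G.Adj w u →
      ∀ x ∈ (pickWalk T hTc {t | w ∈ X t}
        (pickBag X i0 (pickNbr G w) w) (pickBag X i0 u w)).support, w ∈ X x := by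
    intro u w h
    have hex : ∃ q : T.Walk (pickBag X i0 (pickNbr G w) w) (pickBag X i0 u w),
        ∀ x ∈ q.support, x ∈ {t | w ∈ X t} := by
      have h1 := (hcspec h).2
      have h2 := (hpspec h).2
      exact reachIn_of_induce_connected (htr w) h1 h2
    intro x hx
    exact pickWalk_spec hex x hx
  -- Q1 : the hub is in Qset
  have hQ1 : ∀ {u w : V}, G.Adj w u → pickBag X i0 (pickNbr G w) w ∈ Q u w := by
    intro u w h
    rw [hQdef]
    simp only [Qset]
    by_cases hu : u = pickNbr G w
    · rw [if_pos hu]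
      subst hu
      exact hcspec h
    · rw [if_neg hu]
      exact Or.inr (SimpleGraph.Walk.start_mem_support _)
  -- Q2 : Qset is inside the trace of w
  have hQ2 : ∀ {u w : V}, G.Adj w u → ∀ t ∈ Q u w, w ∈ X t := by
    intro u w h t ht
    rw [hQdef] at ht
    simp only [Qset] at ht
    by_cases hu : u = pickNbr G w
    · rw [if_pos hu] at ht
      exact ht.2
    · rw [if_neg hu] at ht
      rcases ht with ht | ht
      · exact ht.2
      · exact hwalk h t ht
  -- Q2' : Qset is inside the trace of u at the R-part... (p is in trace u)
  have hQp : ∀ {u w : V}, G.Adj w u → pickBag X i0 u w ∈ Q u w ∧ u ∈ X (pickBag X i0 u w) := by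
    intro u w h
    refine ⟨?_, (hpspec h).1⟩
    rw [hQdef]
    simp only [Qset]
    by_cases hu : u = pickNbr G w
    · rw [if_pos hu]; exact ⟨(hpspec h).1, (hpspec h).2⟩
    · rw [if_neg hu]; exact Or.inl ⟨(hpspec h).1, (hpspec h).2⟩
  -- Q4 : gap property for the chosen neighbor
  have hQ4 : ∀ {w : V} (u : V), G.Adj w u → ∀ t ∈ Q (pickNbr G w) w, pickNbr G w ∈ X t := by
    intro w u h t ht
    rw [hQdef] at ht
    simp only [Qset, if_pos rfl] at ht
    exact ht.1
  -- Q3 : reach within Qset towards pickBag u w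
  have hQ3 : ∀ {u w : V}, G.Adj w u → ∀ t ∈ Q u w, ReachIn T (Q u w) t (pickBag X i0 u w) := by
    intro u w h t ht
    have hRsub : {t | u ∈ X t ∧ w ∈ X t} = ({t | u ∈ X t} ∩ {t | w ∈ X t} : Set (Fin n)) := rfl
    have hreachR : ∀ a ∈ {t | u ∈ X t ∧ w ∈ X t}, ∀ b ∈ {t | u ∈ X t ∧ w ∈ X t},
        ReachIn T {t | u ∈ X t ∧ w ∈ X t} a b := by
      intro a ha b hb
      rw [hRsub]
      exact reachIn_inter hTa (htr u) (htr w) ha.1 ha.2 hb.1 hb.2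
    rw [hQdef] at ht ⊢
    simp only [Qset] at ht ⊢
    by_cases hu : u = pickNbr G w
    · rw [if_pos hu] at ht ⊢
      exact hreachR t ht _ ⟨(hpspec h).1, (hpspec h).2⟩
    · rw [if_neg hu] at ht ⊢
      rcases ht with ht | ht
      · exact (hreachR t ht _ ⟨(hpspec h).1, (hpspec h).2⟩).mono Set.subset_union_left
      · refine ⟨(pickWalk T hTc {t | w ∈ X t} (pickBag X i0 (pickNbr G w) w)
            (pickBag X i0 u w)).dropUntil t ht, fun x hx => ?_⟩
        exact Or.inr (SimpleGraph.Walk.support_dropUntil_subset _ ht hx)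
  -- the new bags
  set C : Fin n → Finset V := fun t =>
    X t ∪ (X t).biUnion (fun w => ((G.neighborFinset w).filter fun u => t ∈ Q u w) \ X t)
    with hCdef
  have hCmem : ∀ (v : V) (t : Fin n),
      v ∈ C t ↔ v ∈ X t ∨ ∃ w, w ∈ X t ∧ G.Adj w v ∧ t ∈ Q v w ∧ v ∉ X t := by
    intro v t
    rw [hCdef]
    simp only [Finset.mem_union, Finset.mem_biUnion, Finset.mem_sdiff, Finset.mem_filter,
      SimpleGraph.mem_neighborFinset]
    constructor
    · rintro (h | ⟨w, hw, ⟨⟨h1, h2⟩, h3⟩⟩)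
      · exact Or.inl h
      · exact Or.inr ⟨w, hw, h1, h2, h3⟩
    · rintro (h | ⟨w, hw, h1, h2, h3⟩)
      · exact Or.inl h
      · exact Or.inr ⟨w, hw, ⟨⟨h1, h2⟩, h3⟩⟩
  refine ⟨n, T, C, hTc, hTa, ?_, ?_, ?_, ?_⟩
  · -- cover
    intro v
    obtain ⟨t, ht⟩ := hcov v
    exact ⟨t, (hCmem v t).mpr (Or.inl ht)⟩
  · -- edges of the square
    intro u v hadj
    rw [graphSquare, SimpleGraph.fromRel_adj] at hadj
    obtain ⟨hne, hrel⟩ := hadj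
    have key : ∀ a b : V, (G.Adj a b ∨ ∃ w, G.Adj a w ∧ G.Adj w b) →
        ∃ i, a ∈ C i ∧ b ∈ C i := by
      intro a b hab
      rcases hab with hab | ⟨w, h1, h2⟩
      · obtain ⟨t, ht1, ht2⟩ := hedge a b hab
        exact ⟨t, (hCmem a t).mpr (Or.inl ht1), (hCmem b t).mpr (Or.inl ht2)⟩
      · -- distance two through w
        have h1' : G.Adj w a := h1.symm
        set t := pickBag X i0 (pickNbr G w) w with htdef
        have hwX : w ∈ X t := (hcspec h1').2
        have hmem : ∀ c : V, G.Adj w c → c ∈ C t := by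
          intro c hc
          by_cases hcX : c ∈ X t
          · exact (hCmem c t).mpr (Or.inl hcX)
          · exact (hCmem c t).mpr (Or.inr ⟨w, hwX, hc, hQ1 hc, hcX⟩)
        exact ⟨t, hmem a h1', hmem b h2⟩
    rcases hrel with hrel | hrel
    · exact key u v hrel
    · obtain ⟨i, h1, h2⟩ := key v u hrel
      exact ⟨i, h2, h1⟩
  · -- traces connected
    intro v
    have htrEq : {i | v ∈ C i} =
        {i | v ∈ X i} ∪ ⋃ (w) (_ : G.Adj w v), Q v w := by
      ext t
      simp only [Set.mem_setOf_eq, Set.mem_union, Set.mem_iUnion]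
      rw [hCmem]
      constructor
      · rintro (h | ⟨w, _, h1, h2, _⟩)
        · exact Or.inl h
        · exact Or.inr ⟨w, h1, h2⟩
      · rintro (h | ⟨w, h1, h2⟩)
        · exact Or.inl h
        · by_cases hvX : v ∈ X t
          · exact Or.inl hvX
          · exact Or.inr ⟨w, hQ2 h1 t h2, h1, h2, hvX⟩
    rw [htrEq]
    obtain ⟨t0, ht0⟩ := hcov v
    have hsub1 : {i | v ∈ X i} ⊆ {i | v ∈ X i} ∪ ⋃ (w) (_ : G.Adj w v), Q v w :=
      Set.subset_union_left
    have hsubQ : ∀ {w : V}, G.Adj w v →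
        Q v w ⊆ {i | v ∈ X i} ∪ ⋃ (w) (_ : G.Adj w v), Q v w := by
      intro w hw
      intro x hx
      exact Or.inr (Set.mem_iUnion₂.mpr ⟨w, hw, hx⟩)
    have hanchor : ∀ a ∈ ({i | v ∈ X i} ∪ ⋃ (w) (_ : G.Adj w v), Q v w : Set (Fin n)),
        ReachIn T ({i | v ∈ X i} ∪ ⋃ (w) (_ : G.Adj w v), Q v w) a t0 := by
      intro a ha
      rcases ha with ha | ha
      · exact (reachIn_of_induce_connected (htr v) ha ht0).mono hsub1
      · rw [Set.mem_iUnion₂] at ha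
        obtain ⟨w, hw, haQ⟩ := ha
        have step1 : ReachIn T (Q v w) a (pickBag X i0 v w) := hQ3 hw a haQ
        have step2 : ReachIn T {i | v ∈ X i} (pickBag X i0 v w) t0 :=
          reachIn_of_induce_connected (htr v) (hQp hw).2 ht0
        exact ((step1.mono (hsubQ hw)).trans (step2.mono hsub1))
    refine induce_connected_of_reachIn ⟨t0, Or.inl ht0⟩ ?_
    intro a ha b hb
    exact (hanchor a ha).trans (hanchor b hb).symm
  · -- cardinality
    intro t
    have hsum : ∀ w ∈ X t,
        (((G.neighborFinset w).filter fun u => t ∈ Q u w) \ X t).card ≤ D - 1 := by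
      intro w _
      by_cases hnb : ∃ u ∈ G.neighborFinset w, u ∈ X t
      · obtain ⟨u1, hu1n, hu1x⟩ := hnb
        have hss : ((G.neighborFinset w).filter fun u => t ∈ Q u w) \ X t ⊆
            (G.neighborFinset w).erase u1 := by
          intro x hx
          rw [Finset.mem_sdiff, Finset.mem_filter] at hx
          rw [Finset.mem_erase]
          exact ⟨fun h => hx.2 (h ▸ hu1x), hx.1.1⟩
        calc (((G.neighborFinset w).filter fun u => t ∈ Q u w) \ X t).card
            ≤ ((G.neighborFinset w).erase u1).card := Finset.card_le_card hss
          _ = G.degree w - 1 := by rw [Finset.card_erase_of_mem hu1n]; rfl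
          _ ≤ D - 1 := Nat.sub_le_sub_right (G.degree_le_maxDegree w) 1
      · by_cases hw : ∃ u, G.Adj w u
        · have hu0n : pickNbr G w ∈ G.neighborFinset w := by
            rw [SimpleGraph.mem_neighborFinset]
            exact pickNbr_adj hw
          have hss : ((G.neighborFinset w).filter fun u => t ∈ Q u w) \ X t ⊆
              (G.neighborFinset w).erase (pickNbr G w) := by
            intro x hx
            rw [Finset.mem_sdiff, Finset.mem_filter] at hx
            rw [Finset.mem_erase]
            refine ⟨?_, hx.1.1⟩
            intro hxu
            have hx2 := hx.1.2
            rw [hxu] at hx2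
            have hmem := hQ4 hw.choose hw.choose_spec t hx2
            exact hnb ⟨pickNbr G w, hu0n, hmem⟩
          calc (((G.neighborFinset w).filter fun u => t ∈ Q u w) \ X t).card
              ≤ ((G.neighborFinset w).erase (pickNbr G w)).card := Finset.card_le_card hss
            _ = G.degree w - 1 := by rw [Finset.card_erase_of_mem hu0n]; rfl
            _ ≤ D - 1 := Nat.sub_le_sub_right (G.degree_le_maxDegree w) 1
        · have hempty : G.neighborFinset w = ∅ := by
            rw [Finset.eq_empty_iff_forall_notMem]
            intro x hx
            rw [SimpleGraph.mem_neighborFinset] at hx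
            exact hw ⟨x, hx⟩
          rw [hempty]
          simp
    have h1 : (C t).card ≤ (X t).card +
        ((X t).biUnion (fun w => ((G.neighborFinset w).filter fun u => t ∈ Q u w) \ X t)).card := by
      rw [hCdef]
      exact Finset.card_union_le _ _
    have h2 : ((X t).biUnion (fun w => ((G.neighborFinset w).filter fun u => t ∈ Q u w) \ X t)).card
        ≤ (X t).card * (D - 1) := by
      calc ((X t).biUnion (fun w => ((G.neighborFinset w).filter fun u => t ∈ Q u w) \ X t)).card
          ≤ ∑ w ∈ X t, (((G.neighborFinset w).filter fun u => t ∈ Q u w) \ X t).card :=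
            Finset.card_biUnion_le
        _ ≤ (X t).card * (D - 1) := by
            rw [← smul_eq_mul]
            exact Finset.sum_le_card_nsmul _ _ _ hsum
    have h3 : (C t).card ≤ (k + 1) + (k + 1) * (D - 1) := by
      calc (C t).card ≤ (X t).card + (X t).card * (D - 1) := le_trans h1 (by omega)
        _ ≤ (k + 1) + (k + 1) * (D - 1) := by
            have := hcard t
            exact Nat.add_le_add this (Nat.mul_le_mul_right _ this)
    have h4 : (k + 1) + (k + 1) * (D - 1) = D * (k + 1) := by
      have hD1 : 1 + (D - 1) = D := by omega
      calc (k + 1) + (k + 1) * (D - 1) = (k + 1) * (1 + (D - 1)) := by ring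
        _ = (k + 1) * D := by rw [hD1]
        _ = D * (k + 1) := by ring
    have h5 : D * (k + 1) - 1 + 1 = D * (k + 1) := by
      have : 1 ≤ D * (k + 1) := Nat.one_le_iff_ne_zero.mpr (by positivity)
      omega
    rw [h5]
    omega
end MainStep

section DegreeZero

variable {V : Type} [Fintype V]

lemma degree_zero_tdw (G : SimpleGraph V) [DecidableRel G.Adj] (h0 : G.maxDegree = 0) :
    HasTreeDecompositionOfWidth (graphSquare G) 0 := by
  classical
  have hnoadj : ∀ a b : V, ¬G.Adj a b := by
    intro a b hab
    have h1 : 0 < G.degree a := (G.degree_pos_iff_exists_adj a).mpr ⟨b, hab⟩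
    have h2 := G.degree_le_maxDegree a
    omega
  set m := Fintype.card V with hm
  set e : V ≃ Fin m := Fintype.equivFin V with he
  refine ⟨m + 1, starTree m,
    fun i => Finset.univ.filter (fun v => ((e v : ℕ)) = (i : ℕ)),
    starTree_connected m, starTree_acyclic m, ?_, ?_, ?_, ?_⟩
  · intro v
    refine ⟨(e v).castSucc, ?_⟩
    simp
  · intro u v huv
    rw [graphSquare, SimpleGraph.fromRel_adj] at huv
    exfalso
    rcases huv.2 with (h | ⟨w, h, _⟩) | (h | ⟨w, h, _⟩) <;> exact hnoadj _ _ h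
  · intro v
    refine induce_connected_of_subsingleton _ ⟨(e v).castSucc, ?_⟩ ?_
    · simp
    · intro i hi j hj
      simp only [Set.mem_setOf_eq, Finset.mem_filter] at hi hj
      exact Fin.ext (by rw [← hi.2, ← hj.2])
  · intro i
    refine le_trans (Finset.card_le_one.mpr ?_) (by norm_num)
    intro a ha b hb
    simp only [Finset.mem_filter] at ha hb
    exact e.injective (Fin.ext (by rw [ha.2, hb.2]))

end DegreeZero

lemma trivial_tdw {V : Type} [Fintype V] (G : SimpleGraph V) :
    HasTreeDecompositionOfWidth G (Fintype.card V) := by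
  classical
  haveI : Nonempty (Fin 1) := ⟨0⟩
  refine ⟨1, ⊥, fun _ => Finset.univ, ⟨fun a b => by rw [Subsingleton.elim a b]⟩,
    SimpleGraph.isAcyclic_bot, fun v => ⟨0, Finset.mem_univ v⟩,
    fun u v _ => ⟨0, Finset.mem_univ u, Finset.mem_univ v⟩, ?_, fun i => ?_⟩
  · intro v
    have hset : {i : Fin 1 | v ∈ (Finset.univ : Finset V)} = Set.univ := by
      ext i; simp
    rw [hset]
    exact induce_connected_of_subsingleton _ ⟨0, trivial⟩ (fun a _ b _ => Subsingleton.elim a b)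
  · simp

theorem treewidth_square_le
    {V : Type} [Fintype V] (G : SimpleGraph V) [DecidableRel G.Adj] :
    treewidth (graphSquare G) ≤ G.maxDegree * (treewidth G + 1) - 1 := by
  by_cases h0 : G.maxDegree = 0
  · have hle : treewidth (graphSquare G) ≤ 0 := Nat.sInf_le (degree_zero_tdw G h0)
    have h2 : G.maxDegree * (treewidth G + 1) - 1 = 0 := by rw [h0]; simp
    rw [h2]
    exact hle
  · have h1 : 1 ≤ G.maxDegree := Nat.one_le_iff_ne_zero.mpr h0
    have hne : {k | HasTreeDecompositionOfWidth G k}.Nonempty := ⟨_, trivial_tdw G⟩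
    have hmem : HasTreeDecompositionOfWidth G (treewidth G) := Nat.sInf_mem hne
    exact Nat.sInf_le (main_step G h1 hmem)
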